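/- Let U ⊂ ℝ^m be a convex compact set and let F : ℝ^m → ℂ^N be continuously differentiable. Assume F restricted to U is injective and that the Fréchet derivative DF(θ) is injective (as a linear map) for every θ ∈ U. Then there exists a constant C > 0 such that for all θ, θ' ∈ U, ‖θ - θ'‖ ≤ C · ‖F(θ) - F(θ')‖. -/

import Mathlib

set_option maxHeartbeats 1000000

open Metric Set

theorem abstract_stability (m N : ℕ) (U : Set (EuclideanSpace ℝ (Fin m)))
    (F : EuclideanSpace ℝ (Fin m) → EuclideanSpace ℂ (Fin N))
    (hUconv : Convex ℝ U) (hUcomp : IsCompact U)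
    (hF : ContDiff ℝ 1 F) (hFinj : Set.InjOn F U)
    (hDF : ∀ θ ∈ U, Function.Injective (fderiv ℝ F θ)) :
    ∃ C > 0, ∀ θ ∈ U, ∀ θ' ∈ U, ‖θ - θ'‖ ≤ C * ‖F θ - F θ'‖ := by
  rcases U.eq_empty_or_nonempty with hU | hU
  · exact ⟨1, one_pos, by simp [hU]⟩
  have hFd : Differentiable ℝ F := hF.differentiable one_ne_zero
  have hcont : Continuous (fun x => fderiv ℝ F x) := hF.continuous_fderiv one_ne_zero
  -- local antilipschitz around each point of U
  have key : ∀ x : U, ∃ K : ℝ, 0 < K ∧ ∃ r : ℝ, 0 < r ∧ ∀ θ ∈ ball (x : EuclideanSpace ℝ (Fin m)) r,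
      ∀ θ' ∈ ball (x : EuclideanSpace ℝ (Fin m)) r, ‖θ - θ'‖ ≤ K * ‖F θ - F θ'‖ := by
    rintro ⟨x, hx⟩
    obtain ⟨K, hK, hanti⟩ := (fderiv ℝ F x).toLinearMap.exists_antilipschitzWith
      (LinearMap.ker_eq_bot.2 (hDF x hx))
    have hKpos : (0:ℝ) < K := by exact_mod_cast hK
    have hεpos : (0:ℝ) < 1 / (2 * K) := by positivity
    obtain ⟨r, hr, hball⟩ := Metric.continuousAt_iff.1 hcont.continuousAt (1/(2*K)) hεpos
    refine ⟨2*K, by positivity, r, hr, ?_⟩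
    intro θ hθ θ' hθ'
    have bound : ∀ y ∈ ball x r, ‖fderiv ℝ F y - fderiv ℝ F x‖ ≤ 1/(2*K) := by
      intro y hy
      have := hball hy
      rw [dist_eq_norm] at this
      exact this.le
    have hmv := (convex_ball x r).norm_image_sub_le_of_norm_hasFDerivWithin_le'
      (fun y hy => (hFd y).hasFDerivAt.hasFDerivWithinAt) bound hθ' hθ
    -- hmv : ‖F θ - F θ' - (fderiv ℝ F x) (θ - θ')‖ ≤ 1/(2K) * ‖θ - θ'‖
    have h1 : ‖θ - θ'‖ ≤ K * ‖(fderiv ℝ F x) (θ - θ')‖ := by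
      have := hanti.le_mul_dist (θ - θ') 0
      simpa [dist_eq_norm] using this
    have h2 : ‖(fderiv ℝ F x) (θ - θ')‖ ≤ ‖F θ - F θ'‖ + 1/(2*K) * ‖θ - θ'‖ := by
      have : ‖(fderiv ℝ F x) (θ - θ')‖ ≤ ‖F θ - F θ' - (fderiv ℝ F x) (θ - θ')‖ + ‖F θ - F θ'‖ := by
        have := norm_sub_norm_le (F θ - F θ' - (fderiv ℝ F x) (θ - θ')) (F θ - F θ')
        have h := norm_sub_le (F θ - F θ' - (fderiv ℝ F x) (θ - θ')) (F θ - F θ')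
        calc ‖(fderiv ℝ F x) (θ - θ')‖
            = ‖(F θ - F θ' - (fderiv ℝ F x) (θ - θ')) - (F θ - F θ')‖ := by
              rw [sub_sub_cancel_left, norm_neg]
          _ ≤ _ := h
      linarith [hmv]
    have h3 : (K:ℝ) * (1/(2*(K:ℝ)) * ‖θ - θ'‖) = (1/2)*‖θ - θ'‖ := by
      field_simp
    have h4 := mul_le_mul_of_nonneg_left h2 hKpos.le
    rw [mul_add, h3] at h4
    linarith [h1, h4]
  choose K hKpos r hrpos hloc using key
  -- finite subcover
  obtain ⟨t, ht⟩ := hUcomp.elim_finite_subcover (fun x : U => ball (x : EuclideanSpace ℝ (Fin m)) (r x))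
    (fun x => isOpen_ball) (fun θ hθ => mem_iUnion.2 ⟨⟨θ, hθ⟩, mem_ball_self (hrpos ⟨θ, hθ⟩)⟩)
  have htne : t.Nonempty := by
    obtain ⟨θ, hθ⟩ := hU
    have := ht hθ
    simp only [mem_iUnion] at this
    obtain ⟨i, hi, _⟩ := this
    exact ⟨i, hi⟩
  -- Lebesgue number for the finite cover
  have hcover : U ⊆ ⋃ i : {i : ↑U // i ∈ t}, ball ((i : ↑U) : EuclideanSpace ℝ (Fin m)) (r i) := by
    intro θ hθ
    have := ht hθ
    simp only [mem_iUnion] at this ⊢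
    obtain ⟨i, hi, h⟩ := this
    exact ⟨⟨i, hi⟩, h⟩
  obtain ⟨δ, hδ, hleb⟩ := lebesgue_number_lemma_of_metric hUcomp (fun _ => isOpen_ball) hcover
  set C₁ : ℝ := t.sup' htne K with hC₁
  have hC₁pos : 0 < C₁ := by
    obtain ⟨i, hi⟩ := htne
    exact lt_of_lt_of_le (hKpos i) (Finset.le_sup' K hi)
  have hnear : ∀ θ ∈ U, ∀ θ' ∈ U, dist θ θ' < δ → ‖θ - θ'‖ ≤ C₁ * ‖F θ - F θ'‖ := by
    intro θ hθ θ' hθ' hd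
    obtain ⟨⟨i, hi⟩, hsub⟩ := hleb θ hθ
    have hθb : θ ∈ ball (i : EuclideanSpace ℝ (Fin m)) (r i) := hsub (mem_ball_self hδ)
    have hθ'b : θ' ∈ ball (i : EuclideanSpace ℝ (Fin m)) (r i) := hsub (by
      rw [mem_ball, dist_comm]; exact hd)
    have := hloc i θ hθb θ' hθ'b
    calc ‖θ - θ'‖ ≤ K i * ‖F θ - F θ'‖ := this
      _ ≤ C₁ * ‖F θ - F θ'‖ :=
        mul_le_mul_of_nonneg_right (Finset.le_sup' K hi) (norm_nonneg _)
  -- far pairs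
  obtain ⟨M, hM⟩ := Metric.isBounded_iff.1 hUcomp.isBounded
  set Kfar : Set (EuclideanSpace ℝ (Fin m) × EuclideanSpace ℝ (Fin m)) :=
    (U ×ˢ U) ∩ {p | δ ≤ dist p.1 p.2} with hKfar
  have hKfarc : IsCompact Kfar := by
    refine (hUcomp.prod hUcomp).inter_right ?_
    have : IsClosed {p : EuclideanSpace ℝ (Fin m) × EuclideanSpace ℝ (Fin m) | δ ≤ dist p.1 p.2} :=
      isClosed_le continuous_const (continuous_dist.comp (continuous_fst.prodMk continuous_snd))
    simpa using this
  rcases Kfar.eq_empty_or_nonempty with hKe | hKne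
  · refine ⟨C₁, hC₁pos, fun θ hθ θ' hθ' => ?_⟩
    apply hnear θ hθ θ' hθ'
    by_contra h
    push_neg at h
    have : (θ, θ') ∈ Kfar := ⟨⟨hθ, hθ'⟩, h⟩
    rw [hKe] at this
    exact this
  · obtain ⟨p, hpK, hpmin⟩ := hKfarc.exists_isMinOn hKne
      ((hF.continuous.comp continuous_fst).sub (hF.continuous.comp continuous_snd)).norm.continuousOn
    set ε : ℝ := ‖F p.1 - F p.2‖ with hε
    have hεpos : 0 < ε := by
      have hne : p.1 ≠ p.2 := by
        intro h
        have hd : δ ≤ dist p.1 p.2 := hpK.2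
        rw [h, dist_self] at hd
        linarith
      have hFne : F p.1 ≠ F p.2 := fun h => hne (hFinj hpK.1.1 hpK.1.2 h)
      rw [hε, norm_pos_iff]
      exact sub_ne_zero.2 hFne
    refine ⟨max C₁ (M / ε), lt_of_lt_of_le hC₁pos (le_max_left _ _), fun θ hθ θ' hθ' => ?_⟩
    rcases lt_or_ge (dist θ θ') δ with hd | hd
    · calc ‖θ - θ'‖ ≤ C₁ * ‖F θ - F θ'‖ := hnear θ hθ θ' hθ' hd
        _ ≤ max C₁ (M / ε) * ‖F θ - F θ'‖ :=
          mul_le_mul_of_nonneg_right (le_max_left _ _) (norm_nonneg _)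
    · have hmem : (θ, θ') ∈ Kfar := ⟨⟨hθ, hθ'⟩, hd⟩
      have hεle : ε ≤ ‖F θ - F θ'‖ := by
        have := isMinOn_iff.1 hpmin (θ, θ') hmem
        simpa [hε] using this
      have hnorm : ‖θ - θ'‖ ≤ M := by
        rw [← dist_eq_norm]; exact hM hθ hθ'
      calc ‖θ - θ'‖ ≤ M := hnorm
        _ = (M / ε) * ε := by field_simp
        _ ≤ (M / ε) * ‖F θ - F θ'‖ := by
            have hM0 : 0 ≤ M := le_trans dist_nonneg (hM hθ hθ)
            exact mul_le_mul_of_nonneg_left hεle (div_nonneg hM0 hεpos.le)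
        _ ≤ max C₁ (M / ε) * ‖F θ - F θ'‖ :=
          mul_le_mul_of_nonneg_right (le_max_right _ _) (norm_nonneg _)
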